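/- arXiv:2103.12891 — 5 statements merged into one kernel-verified Lean document; each statement's English description precedes it below -/
import Mathlib

section
/- With the setting of the preceding K₂-functional formula, for s ∈ (0,1) one has (2 sin(πs)/π) ∫₀^∞ t^{-1-2s} K₂(t,v)² dt = Σ_k λ_k^{2s} v_k², provided the right-hand side is finite. -/
open MeasureTheory Real

private lemma beta_real' {s : ℝ} (hs0 : 0 < s) (hs1 : s < 1) :
    ∫ t in Set.Ioo (0:ℝ) 1, t ^ (-s) * (1 - t) ^ (s - 1) = π / Real.sin (π * s) := by
  have h1 : (0:ℝ) < 1 - s := by linarith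
  have hb : Complex.betaIntegral (1 - (s:ℂ)) s = ((π / Real.sin (π * s) : ℝ) : ℂ) := by
    have h := Complex.Gamma_mul_Gamma_eq_betaIntegral (s := 1 - (s:ℂ)) (t := (s:ℂ))
      (by simpa using h1) (by simpa using hs0)
    rw [show (1 - (s:ℂ)) + s = 1 by ring, Complex.Gamma_one, one_mul] at h
    rw [← h, mul_comm, Complex.Gamma_mul_Gamma_one_sub]
    push_cast [Complex.ofReal_sin]
    ring_nf
  have hI : Complex.betaIntegral (1 - (s:ℂ)) s
      = ((∫ t in Set.Ioo (0:ℝ) 1, t ^ (-s) * (1 - t) ^ (s - 1) : ℝ) : ℂ) := by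
    rw [Complex.betaIntegral, intervalIntegral.integral_of_le zero_le_one,
      integral_Ioc_eq_integral_Ioo,
      show (∫ t in Set.Ioo (0:ℝ) 1, (t:ℂ) ^ (1 - (s:ℂ) - 1) * (1 - (t:ℂ)) ^ ((s:ℂ) - 1))
        = ∫ t in Set.Ioo (0:ℝ) 1, ((t ^ (-s) * (1 - t) ^ (s - 1) : ℝ) : ℂ) from
      setIntegral_congr_fun measurableSet_Ioo fun x hx => ?_]
    · exact integral_ofReal
    · obtain ⟨hx0, hx1⟩ := hx
      push_cast
      rw [Complex.ofReal_cpow hx0.le, Complex.ofReal_cpow (by linarith : (0:ℝ) ≤ 1 - x)]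
      push_cast
      ring_nf
  have := hI.symm.trans hb
  exact_mod_cast this

private lemma g_val' {s : ℝ} (hs0 : 0 < s) (hs1 : s < 1) :
    ∫ x in Set.Ioi (0:ℝ), x ^ (-s) / (1 + x) = π / Real.sin (π * s) := by
  have hbeta := beta_real' hs0 hs1
  set f : ℝ → ℝ := fun t => t / (1 - t) with hf
  have himg : f '' Set.Ioo 0 1 = Set.Ioi 0 := by
    ext y
    constructor
    · rintro ⟨t, ⟨ht0, ht1⟩, rfl⟩
      exact div_pos ht0 (by linarith)
    · intro hy
      rw [Set.mem_Ioi] at hy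
      refine ⟨y / (1 + y), ⟨div_pos hy (by linarith), ?_⟩, ?_⟩
      · rw [div_lt_one (by linarith)]; linarith
      · simp only [hf]
        have h1y : (0:ℝ) < 1 + y := by linarith
        field_simp
        ring
  have hderiv : ∀ t ∈ Set.Ioo (0:ℝ) 1, HasDerivWithinAt f (((1 - t)^2)⁻¹) (Set.Ioo 0 1) t := by
    intro t ht
    have h1t : (1:ℝ) - t ≠ 0 := ne_of_gt (by linarith [ht.2])
    have := ((hasDerivAt_id t).div ((hasDerivAt_id t).const_sub 1) h1t)
    exact this.hasDerivWithinAt.congr_deriv (by simp only [id]; ring)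
  have hinj : Set.InjOn f (Set.Ioo 0 1) := by
    apply StrictMonoOn.injOn
    intro a ha b hb hab
    rw [hf]
    rw [div_lt_div_iff₀ (by linarith [ha.2]) (by linarith [hb.2])]
    nlinarith [ha.1, hb.2]
  have key := integral_image_eq_integral_abs_deriv_smul measurableSet_Ioo hderiv hinj
    (fun x => x ^ (-s) / (1 + x))
  rw [himg] at key
  rw [key, ← hbeta]
  refine setIntegral_congr_fun measurableSet_Ioo fun t ht => ?_
  obtain ⟨ht0, ht1⟩ := ht
  have h1t : (0:ℝ) < 1 - t := by linarith
  have h1 : 1 + t / (1 - t) = (1 - t)⁻¹ := by field_simp; ring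
  rw [smul_eq_mul, hf]
  simp only
  rw [h1, Real.div_rpow ht0.le h1t.le, Real.rpow_neg ht0.le, Real.rpow_neg h1t.le,
    Real.rpow_sub h1t, Real.rpow_one]
  rw [abs_of_pos (by positivity)]
  field_simp

private lemma F_int' {s a : ℝ} (hs0 : 0 < s) (hs1 : s < 1) (ha : 0 < a) :
    IntegrableOn (fun t : ℝ => t ^ (-1 - 2*s) * (a^2 * t^2 / (1 + a^2 * t^2))) (Set.Ioi 0) := by
  have hmeas : ∀ (S : Set ℝ), AEStronglyMeasurable
      (fun t : ℝ => t ^ (-1 - 2*s) * (a^2 * t^2 / (1 + a^2 * t^2))) (volume.restrict S) := by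
    intro S
    apply Measurable.aestronglyMeasurable
    apply Measurable.mul
    · fun_prop
    · apply Measurable.div <;> fun_prop
  rw [← Set.Ioc_union_Ioi_eq_Ioi (zero_le_one (α := ℝ))]
  apply IntegrableOn.union
  · have hint : IntegrableOn (fun t : ℝ => a^2 * t ^ (1 - 2*s)) (Set.Ioc 0 1) := by
      apply Integrable.const_mul
      exact (intervalIntegral.intervalIntegrable_rpow' (by linarith)).1
    refine hint.mono' (hmeas _) ?_
    rw [ae_restrict_iff' measurableSet_Ioc]
    refine Filter.Eventually.of_forall fun t ht => ?_
    obtain ⟨ht0, ht1⟩ := ht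
    have h1 : (0:ℝ) < 1 + a^2 * t^2 := by positivity
    have hratio : a^2 * t^2 / (1 + a^2 * t^2) ≤ a^2 * t^2 := by
      rw [div_le_iff₀ h1]; nlinarith [sq_nonneg (a*t)]
    have hnn : (0:ℝ) ≤ t ^ (-1 - 2*s) := Real.rpow_nonneg ht0.le _
    rw [Real.norm_eq_abs, abs_of_nonneg (by positivity)]
    calc t ^ (-1 - 2*s) * (a^2 * t^2 / (1 + a^2 * t^2))
        ≤ t ^ (-1 - 2*s) * (a^2 * t^2) := by gcongr
      _ = a^2 * (t ^ (-1 - 2*s) * t ^ (2:ℝ)) := by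
          rw [← Real.rpow_natCast t 2]; push_cast; ring
      _ = a^2 * t ^ (1 - 2*s) := by rw [← Real.rpow_add ht0]; ring_nf
  · have hint : IntegrableOn (fun t : ℝ => t ^ (-1 - 2*s)) (Set.Ioi 1) :=
      (integrableOn_Ioi_rpow_iff one_pos).2 (by linarith)
    refine hint.mono' (hmeas _) ?_
    rw [ae_restrict_iff' measurableSet_Ioi]
    refine Filter.Eventually.of_forall fun t ht => ?_
    rw [Set.mem_Ioi] at ht
    have ht0 : (0:ℝ) < t := lt_trans one_pos ht
    have h1 : (0:ℝ) < 1 + a^2 * t^2 := by positivity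
    have hratio : a^2 * t^2 / (1 + a^2 * t^2) ≤ 1 := by
      rw [div_le_one h1]; linarith
    have hnn : (0:ℝ) ≤ t ^ (-1 - 2*s) := Real.rpow_nonneg ht0.le _
    rw [Real.norm_eq_abs, abs_of_nonneg (by positivity)]
    nth_rewrite 2 [← mul_one (t ^ (-1 - 2*s))]
    gcongr

private lemma F_val' {s a : ℝ} (hs0 : 0 < s) (hs1 : s < 1) (ha : 0 < a) :
    ∫ t in Set.Ioi (0:ℝ), t ^ (-1 - 2*s) * (a^2 * t^2 / (1 + a^2 * t^2))
      = a ^ (2*s) * (π / (2 * Real.sin (π * s))) := by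
  have hg := g_val' hs0 hs1
  set f : ℝ → ℝ := fun t => a^2 * t^2 with hf
  have himg : f '' Set.Ioi 0 = Set.Ioi 0 := by
    ext y; constructor
    · rintro ⟨t, ht, rfl⟩
      rw [Set.mem_Ioi] at ht ⊢
      positivity
    · intro hy
      rw [Set.mem_Ioi] at hy
      refine ⟨Real.sqrt y / a, Set.mem_Ioi.2 (by positivity), ?_⟩
      simp only [hf]
      rw [div_pow, Real.sq_sqrt hy.le]
      field_simp
  have hderiv : ∀ t ∈ Set.Ioi (0:ℝ), HasDerivWithinAt f (2 * a^2 * t) (Set.Ioi 0) t := by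
    intro t ht
    have : HasDerivAt f (a^2 * (2 * t)) t := ((hasDerivAt_pow 2 t).const_mul (a^2)).congr_deriv
      (by ring_nf)
    exact (this.congr_deriv (by ring)).hasDerivWithinAt
  have hinj : Set.InjOn f (Set.Ioi 0) := by
    intro x hx y hy hxy
    rw [Set.mem_Ioi] at hx hy
    simp only [hf] at hxy
    have h2 : x^2 = y^2 := mul_left_cancel₀ (ne_of_gt (pow_pos ha 2)) hxy
    rw [← Real.sqrt_sq hx.le, ← Real.sqrt_sq hy.le, h2]
  have key := integral_image_eq_integral_abs_deriv_smul measurableSet_Ioi hderiv hinj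
    (fun x => x ^ (-s) / (1 + x))
  rw [himg, hg] at key
  have hstep : ∫ t in Set.Ioi (0:ℝ), |2 * a^2 * t| • ((a^2*t^2) ^ (-s) / (1 + a^2*t^2))
      = (2 * a ^ (-(2*s))) * ∫ t in Set.Ioi (0:ℝ),
          t ^ (-1 - 2*s) * (a^2 * t^2 / (1 + a^2 * t^2)) := by
    rw [← integral_const_mul]
    refine setIntegral_congr_fun measurableSet_Ioi fun t ht => ?_
    rw [Set.mem_Ioi] at ht
    have hat : (0:ℝ) < a * t := by positivity
    have h1 : (0:ℝ) < 1 + a^2*t^2 := by positivity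
    have he : (a^2*t^2 : ℝ) ^ (-s) = a ^ (-(2*s)) * t ^ (-(2*s)) := by
      rw [show a^2*t^2 = (a*t)^2 by ring,
        show ((a*t)^2 : ℝ) = (a*t) ^ ((2:ℕ):ℝ) from (Real.rpow_natCast _ 2).symm,
        ← Real.rpow_mul hat.le, Real.mul_rpow ha.le ht.le]
      norm_num
    rw [smul_eq_mul, abs_of_pos (by positivity), he]
    rw [show t ^ (-1-2*s) = t ^ (-(2*s)) * t⁻¹ by
      rw [← Real.rpow_neg_one t, ← Real.rpow_add ht]; ring_nf]
    field_simp
  rw [hstep] at key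
  have hsin : (0:ℝ) < Real.sin (π * s) :=
    Real.sin_pos_of_pos_of_lt_pi (by positivity) (by nlinarith [Real.pi_pos])
  have haa : a ^ (2*s) * a ^ (-(2*s)) = 1 := by
    rw [← Real.rpow_add ha]; simp
  refine Eq.symm ?_
  calc a ^ (2*s) * (π / (2 * Real.sin (π * s)))
      = a ^ (2*s) * ((π / Real.sin (π * s)) / 2) := by ring
    _ = a ^ (2*s) * ((2 * a ^ (-(2*s)) * ∫ t in Set.Ioi (0:ℝ),
          t ^ (-1 - 2*s) * (a^2 * t^2 / (1 + a^2 * t^2))) / 2) := by rw [key]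
    _ = (a ^ (2*s) * a ^ (-(2*s))) * ∫ t in Set.Ioi (0:ℝ),
          t ^ (-1 - 2*s) * (a^2 * t^2 / (1 + a^2 * t^2)) := by ring
    _ = _ := by rw [haa, one_mul]

theorem stmt_4 (lam : ℕ → ℝ) (hlam : ∀ k, 0 < lam k) (c : ℕ → ℝ) (s : ℝ)
    (hs0 : 0 < s) (hs1 : s < 1)
    (hsum : Summable (fun k => lam k ^ (2*s) * (c k)^2)) :
    (2 * Real.sin (π * s) / π) *
        ∫ t in Set.Ioi (0:ℝ),
          t ^ (-1 - 2*s) * ∑' k, ((lam k)^2 * t^2 / (1 + (lam k)^2 * t^2)) * (c k)^2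
      = ∑' k, lam k ^ (2*s) * (c k)^2 := by
  have hsin : (0:ℝ) < Real.sin (π * s) :=
    Real.sin_pos_of_pos_of_lt_pi (by positivity) (by nlinarith [Real.pi_pos])
  set C : ℝ := π / (2 * Real.sin (π * s)) with hC
  have hCpos : 0 < C := by rw [hC]; positivity
  set f : ℕ → ℝ → ℝ := fun k t =>
    t ^ (-1 - 2*s) * ((lam k)^2 * t^2 / (1 + (lam k)^2 * t^2) * (c k)^2) with hfdef
  have hfk : ∀ k, f k = fun t =>
      (t ^ (-1 - 2*s) * ((lam k)^2 * t^2 / (1 + (lam k)^2 * t^2))) * (c k)^2 :=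
    fun k => funext fun t => by rw [hfdef]; ring
  have hint : ∀ k, IntegrableOn (f k) (Set.Ioi 0) := by
    intro k
    rw [hfk k]
    exact (F_int' hs0 hs1 (hlam k)).mul_const _
  have hval : ∀ k, ∫ t in Set.Ioi (0:ℝ), f k t = (lam k ^ (2*s) * (c k)^2) * C := by
    intro k
    rw [hfk k]
    rw [integral_mul_const, F_val' hs0 hs1 (hlam k)]
    ring
  have hnn : ∀ k, ∀ t ∈ Set.Ioi (0:ℝ), 0 ≤ f k t := by
    intro k t ht
    rw [Set.mem_Ioi] at ht
    rw [hfdef]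
    have := Real.rpow_nonneg ht.le (-1 - 2*s)
    positivity
  have hmeas : ∀ k, AEStronglyMeasurable (f k) (volume.restrict (Set.Ioi 0)) := by
    intro k
    apply Measurable.aestronglyMeasurable
    rw [hfdef]
    apply Measurable.mul
    · fun_prop
    · apply Measurable.mul
      · apply Measurable.div <;> fun_prop
      · fun_prop
  have hsum2 : Summable (fun k => (lam k ^ (2*s) * (c k)^2) * C) := hsum.mul_right C
  have hlin : ∀ k, ∫⁻ t in Set.Ioi (0:ℝ), ‖f k t‖₊
      = ENNReal.ofReal ((lam k ^ (2*s) * (c k)^2) * C) := by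
    intro k
    rw [← hval k, ofReal_integral_eq_lintegral_ofReal (hint k)
      ((ae_restrict_iff' measurableSet_Ioi).2 (Filter.Eventually.of_forall (hnn k)))]
    apply lintegral_congr_ae
    filter_upwards [ae_restrict_mem measurableSet_Ioi] with t ht
    rw [← enorm_eq_nnnorm, ← ofReal_norm, Real.norm_eq_abs, abs_of_nonneg (hnn k t ht)]
  have hswap : ∫ t in Set.Ioi (0:ℝ), ∑' k, f k t = ∑' k, ∫ t in Set.Ioi (0:ℝ), f k t := by
    apply integral_tsum hmeas
    rw [show (fun k => ∫⁻ t in Set.Ioi (0:ℝ), ‖f k t‖ₑ)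
        = fun k => ENNReal.ofReal ((lam k ^ (2*s) * (c k)^2) * C) from funext hlin,
      ← ENNReal.ofReal_tsum_of_nonneg (fun k => mul_nonneg (mul_nonneg
        (Real.rpow_nonneg (hlam k).le _) (sq_nonneg _)) hCpos.le) hsum2]
    exact ENNReal.ofReal_ne_top
  have hpt : ∀ t : ℝ, t ^ (-1 - 2*s) * ∑' k, ((lam k)^2 * t^2 / (1 + (lam k)^2 * t^2)) * (c k)^2
      = ∑' k, f k t := by
    intro t
    rw [hfdef]
    exact tsum_mul_left.symm
  calc (2 * Real.sin (π * s) / π) *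
        ∫ t in Set.Ioi (0:ℝ),
          t ^ (-1 - 2*s) * ∑' k, ((lam k)^2 * t^2 / (1 + (lam k)^2 * t^2)) * (c k)^2
      = (2 * Real.sin (π * s) / π) * ∫ t in Set.Ioi (0:ℝ), ∑' k, f k t := by
        simp_rw [hpt]
    _ = (2 * Real.sin (π * s) / π) * ∑' k, ∫ t in Set.Ioi (0:ℝ), f k t := by rw [hswap]
    _ = (2 * Real.sin (π * s) / π) * ∑' k, (lam k ^ (2*s) * (c k)^2) * C := by
        rw [tsum_congr hval]
    _ = (2 * Real.sin (π * s) / π) * ((∑' k, lam k ^ (2*s) * (c k)^2) * C) := by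
        rw [tsum_mul_right]
    _ = ∑' k, lam k ^ (2*s) * (c k)^2 := by
        rw [hC]
        have hπ : (π:ℝ) ≠ 0 := ne_of_gt Real.pi_pos
        field_simp
end

section
/- Let V be a finite-dimensional inner product space decomposed as a sum of subspaces V = Σ_{j=0}^J V_j, with I_j : V_j → V the inclusions, Q_j = I_j^t the orthogonal projections onto V_j, and R_j : V_j → V_j symmetric positive definite operators. Then B := Σ_{j=0}^J I_j R_j Q_j is symmetric positive definite on V, and for every v ∈ V, (B^{-1}v, v) = inf over all decompositions v = Σ_{j=0}^J v_j with v_j ∈ V_j of Σ_{j=0}^J (R_j^{-1} v_j, v_j). -/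
open scoped RealInnerProductSpace

theorem stmt_5 {H : Type*} [NormedAddCommGroup H] [InnerProductSpace ℝ H]
    [FiniteDimensional ℝ H]
    (J : ℕ) (V : Fin (J+1) → Submodule ℝ H) (hspan : (⨆ j, V j) = ⊤)
    (R Rinv : ∀ j, V j →ₗ[ℝ] V j)
    (hRsymm : ∀ j (u w : V j), ⟪((R j u : V j) : H), (w : H)⟫ = ⟪(u : H), ((R j w : V j) : H)⟫)
    (hRpos : ∀ j (u : V j), u ≠ 0 → 0 < ⟪((R j u : V j) : H), (u : H)⟫)
    (hRinv : ∀ j, (R j).comp (Rinv j) = LinearMap.id ∧ (Rinv j).comp (R j) = LinearMap.id)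
    (B : H →ₗ[ℝ] H)
    (hB : ∀ v : H, B v = ∑ j, ((R j ((V j).orthogonalProjectionOnto v) : V j) : H)) :
    (∀ u w : H, ⟪B u, w⟫ = ⟪u, B w⟫) ∧
    (∀ v : H, v ≠ 0 → 0 < ⟪B v, v⟫) ∧
    Function.Bijective B ∧
    (∀ v w : H, B w = v →
      ⟪w, v⟫ = sInf { r : ℝ | ∃ f : ∀ j, V j, v = ∑ j, ((f j : H)) ∧
        r = ∑ j, ⟪((Rinv j (f j) : V j) : H), ((f j : H))⟫ }) := by
  -- key facts about the orthogonal projection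
  have key1 : ∀ (j : Fin (J+1)) (x : V j) (v : H),
      ⟪(x : H), v⟫ = ⟪(x : H), (((V j).orthogonalProjectionOnto v : V j) : H)⟫ := by
    intro j x v
    have h := Submodule.inner_orthogonalProjectionOnto_eq_of_mem_left (K := V j) x v
    rw [Submodule.coe_inner] at h
    exact h.symm
  have key2 : ∀ (j : Fin (J+1)) (x : V j) (v : H),
      ⟪(((V j).orthogonalProjectionOnto v : V j) : H), (x : H)⟫ = ⟪v, (x : H)⟫ := by
    intro j x v
    rw [real_inner_comm, ← key1 j x v, real_inner_comm]
  have hRid : ∀ (j : Fin (J+1)) (x : V j), R j (Rinv j x) = x := fun j x =>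
    LinearMap.congr_fun (hRinv j).1 x
  have hRid' : ∀ (j : Fin (J+1)) (x : V j), Rinv j (R j x) = x := fun j x =>
    LinearMap.congr_fun (hRinv j).2 x
  -- symmetry of B
  have hBsymm : ∀ u w : H, ⟪B u, w⟫ = ⟪u, B w⟫ := by
    intro u w
    rw [hB u, hB w, sum_inner, inner_sum]
    refine Finset.sum_congr rfl fun j _ => ?_
    calc ⟪((R j ((V j).orthogonalProjectionOnto u) : V j) : H), w⟫
        = ⟪((R j ((V j).orthogonalProjectionOnto u) : V j) : H),
            (((V j).orthogonalProjectionOnto w : V j) : H)⟫ := key1 j _ w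
      _ = ⟪(((V j).orthogonalProjectionOnto u : V j) : H),
            ((R j ((V j).orthogonalProjectionOnto w) : V j) : H)⟫ := hRsymm j _ _
      _ = ⟪u, ((R j ((V j).orthogonalProjectionOnto w) : V j) : H)⟫ := by
            exact key2 j _ u
  -- quadratic form of B
  have hquad : ∀ v : H, ⟪B v, v⟫ =
      ∑ j, ⟪((R j ((V j).orthogonalProjectionOnto v) : V j) : H),
            (((V j).orthogonalProjectionOnto v : V j) : H)⟫ := by
    intro v
    rw [hB v, sum_inner]
    exact Finset.sum_congr rfl fun j _ => key1 j _ v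
  have nonneg_term : ∀ (j : Fin (J+1)) (x : V j), 0 ≤ ⟪((R j x : V j) : H), (x : H)⟫ := by
    intro j x
    rcases eq_or_ne x 0 with h | h
    · simp [h]
    · exact le_of_lt (hRpos j x h)
  -- positivity
  have hpos : ∀ v : H, v ≠ 0 → 0 < ⟪B v, v⟫ := by
    intro v hv
    have hex : ∃ j, (V j).orthogonalProjectionOnto v ≠ 0 := by
      by_contra h
      push_neg at h
      have hmem : ∀ j, v ∈ (V j)ᗮ := fun j =>
        (Submodule.orthogonalProjectionOnto_eq_zero_iff (K := V j)).mp (h j)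
      have : v ∈ (⨆ j, V j)ᗮ := by
        rw [← Submodule.iInf_orthogonal]
        exact Submodule.mem_iInf _ |>.mpr hmem
      rw [hspan, Submodule.top_orthogonal_eq_bot] at this
      exact hv this
    obtain ⟨j, hj⟩ := hex
    rw [hquad v]
    exact Finset.sum_pos' (fun i _ => nonneg_term i _)
      ⟨j, Finset.mem_univ j, hRpos j _ hj⟩
  -- bijectivity
  have hker : ∀ x : H, B x = 0 → x = 0 := by
    intro x hx
    by_contra hne
    have := hpos x hne
    rw [hx] at this
    simp at this
  have hinj : Function.Injective B := by
    rw [← LinearMap.ker_eq_bot]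
    exact LinearMap.ker_eq_bot'.mpr hker
  have hbij : Function.Bijective B := ⟨hinj, (LinearMap.injective_iff_surjective).mp hinj⟩
  -- symmetry and nonnegativity of Rinv
  have hRinvsymm : ∀ (j : Fin (J+1)) (x y : V j),
      ⟪((Rinv j x : V j) : H), (y : H)⟫ = ⟪(x : H), ((Rinv j y : V j) : H)⟫ := by
    intro j x y
    calc ⟪((Rinv j x : V j) : H), (y : H)⟫
        = ⟪((Rinv j x : V j) : H), ((R j (Rinv j y) : V j) : H)⟫ := by rw [hRid]
      _ = ⟪((R j (Rinv j x) : V j) : H), ((Rinv j y : V j) : H)⟫ := (hRsymm j _ _).symm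
      _ = ⟪(x : H), ((Rinv j y : V j) : H)⟫ := by rw [hRid]
  have hRinvnonneg : ∀ (j : Fin (J+1)) (x : V j), 0 ≤ ⟪((Rinv j x : V j) : H), (x : H)⟫ := by
    intro j x
    have : ⟪((Rinv j x : V j) : H), (x : H)⟫
        = ⟪((R j (Rinv j x) : V j) : H), ((Rinv j x : V j) : H)⟫ := by
      rw [hRid, real_inner_comm]
    rw [this]
    exact nonneg_term j _
  refine ⟨hBsymm, hpos, hbij, ?_⟩
  intro v w hw
  set S : Set ℝ := { r : ℝ | ∃ f : ∀ j, V j, v = ∑ j, ((f j : H)) ∧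
        r = ∑ j, ⟪((Rinv j (f j) : V j) : H), ((f j : H))⟫ } with hS
  set g : ∀ j, V j := fun j => R j ((V j).orthogonalProjectionOnto w) with hg
  have hsum_g : ∑ j, ((g j : H)) = v := by rw [← hw, hB]
  have hwg : ∀ j, ⟪((Rinv j (g j) : V j) : H), ((g j : H))⟫ = ⟪w, ((g j : H))⟫ := by
    intro j
    rw [hg]
    simp only
    rw [hRid', key2 j _ w]
  have hval_g : ∑ j, ⟪((Rinv j (g j) : V j) : H), ((g j : H))⟫ = ⟪w, v⟫ := by
    rw [← hsum_g, inner_sum]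
    exact Finset.sum_congr rfl fun j _ => hwg j
  -- lower bound
  have hlow : ∀ r ∈ S, ⟪w, v⟫ ≤ r := by
    rintro r ⟨f, hf1, hf2⟩
    have hterm : ∀ j, ⟪((Rinv j (f j - g j) : V j) : H), ((f j - g j : V j) : H)⟫
        = ⟪((Rinv j (f j) : V j) : H), ((f j : H))⟫
          - 2 * ⟪w, ((f j : H))⟫ + ⟪w, ((g j : H))⟫ := by
      intro j
      have hgf : ⟪((Rinv j (g j) : V j) : H), ((f j : H))⟫ = ⟪w, ((f j : H))⟫ := by
        rw [hg]; simp only; rw [hRid', key2 j _ w]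
      have hfg : ⟪((Rinv j (f j) : V j) : H), ((g j : H))⟫ = ⟪w, ((f j : H))⟫ := by
        rw [hRinvsymm, real_inner_comm]; exact hgf
      rw [map_sub, Submodule.coe_sub, Submodule.coe_sub, inner_sub_left, inner_sub_right,
        inner_sub_right, hfg, hgf, hwg j]
      ring
    have h0 : (0:ℝ) ≤ ∑ j, ⟪((Rinv j (f j - g j) : V j) : H), ((f j - g j : V j) : H)⟫ :=
      Finset.sum_nonneg fun j _ => hRinvnonneg j _
    have hsum : ∑ j, ⟪((Rinv j (f j - g j) : V j) : H), ((f j - g j : V j) : H)⟫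
        = r - 2 * ⟪w, v⟫ + ⟪w, v⟫ := by
      have h1 : ∑ j, ⟪w, ((f j : H))⟫ = ⟪w, v⟫ := by rw [hf1, inner_sum]
      have h2 : ∑ j, ⟪w, ((g j : H))⟫ = ⟪w, v⟫ := by rw [← hsum_g, inner_sum]
      calc ∑ j, ⟪((Rinv j (f j - g j) : V j) : H), ((f j - g j : V j) : H)⟫
          = ∑ j, (⟪((Rinv j (f j) : V j) : H), ((f j : H))⟫
              - 2 * ⟪w, ((f j : H))⟫ + ⟪w, ((g j : H))⟫) :=
            Finset.sum_congr rfl fun j _ => hterm j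
        _ = r - 2 * ⟪w, v⟫ + ⟪w, v⟫ := by
            rw [Finset.sum_add_distrib, Finset.sum_sub_distrib, ← Finset.mul_sum, h1, h2, hf2]
    rw [hsum] at h0
    linarith
  have hmem : ⟪w, v⟫ ∈ S := ⟨g, hsum_g.symm, hval_g.symm⟩
  exact le_antisymm (le_csInf ⟨_, hmem⟩ hlow) (csInf_le ⟨⟪w, v⟫, hlow⟩ hmem)
end

section
/- Let V be a finite-dimensional inner product space, A : V → V symmetric positive definite, and B = Σ_{j=0}^J I_j R_j Q_j as in the parallel subspace correction preconditioner with each R_j SPD. If (A1) for every v ∈ V there exists a decomposition v = Σ_j v_j with v_j ∈ V_j and Σ_j (R_j^{-1}v_j, v_j) ≤ c₀ (Av, v), then the smallest eigenvalue of BA satisfies λ_min(BA) ≥ c₀^{-1}. If (A2) for every choice of v_j ∈ V_j one has (A(Σ_j v_j), Σ_j v_j) ≤ c₁ Σ_j (R_j^{-1}v_j, v_j), then λ_max(BA) ≤ c₁. Consequently, under (A1) and (A2), the condition number of BA is at most c₀ c₁. -/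
open scoped RealInnerProductSpace
set_option maxHeartbeats 1000000

-- Cauchy-Schwarz for a symmetric positive semidefinite operator
lemma cs_op {W : Type*} [NormedAddCommGroup W] [InnerProductSpace ℝ W] (T : W →ₗ[ℝ] W)
    (hs : ∀ x y : W, ⟪T x, y⟫ = ⟪x, T y⟫) (hn : ∀ x : W, 0 ≤ ⟪T x, x⟫) (x y : W) :
    ⟪T x, y⟫ ^ 2 ≤ ⟪T x, x⟫ * ⟪T y, y⟫ := by
  have h : ∀ t : ℝ, 0 ≤ ⟪T y, y⟫ * (t * t) + (2 * ⟪T x, y⟫) * t + ⟪T x, x⟫ := by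
    intro t
    have := hn (x + t • y)
    have hyx : ⟪T y, x⟫ = ⟪T x, y⟫ := by rw [hs y x, real_inner_comm]
    simp only [map_add, map_smul, inner_add_left, inner_add_right, real_inner_smul_left,
      real_inner_smul_right] at this
    rw [hyx] at this; nlinarith [this]
  have hd := discrim_le_zero h
  rw [discrim] at hd
  nlinarith [hd]

theorem stmt_6 {H : Type*} [NormedAddCommGroup H] [InnerProductSpace ℝ H]
    [FiniteDimensional ℝ H]
    (J : ℕ) (V : Fin (J+1) → Submodule ℝ H) (hspan : (⨆ j, V j) = ⊤)
    (R Rinv : ∀ j, V j →ₗ[ℝ] V j)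
    (hRsymm : ∀ j (u w : V j), ⟪((R j u : V j) : H), (w : H)⟫ = ⟪(u : H), ((R j w : V j) : H)⟫)
    (hRpos : ∀ j (u : V j), u ≠ 0 → 0 < ⟪((R j u : V j) : H), (u : H)⟫)
    (hRinv : ∀ j, (R j).comp (Rinv j) = LinearMap.id ∧ (Rinv j).comp (R j) = LinearMap.id)
    (B : H →ₗ[ℝ] H)
    (hB : ∀ v : H, B v = ∑ j, ((R j ((V j).orthogonalProjection v) : V j) : H))
    (A : H →ₗ[ℝ] H)
    (hAsymm : ∀ u w : H, ⟪A u, w⟫ = ⟪u, A w⟫)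
    (hApos : ∀ v : H, v ≠ 0 → 0 < ⟪A v, v⟫)
    (c₀ c₁ : ℝ) (hc₀ : 0 < c₀) (hc₁ : 0 < c₁) :
    -- (A1) stable decomposition implies λ_min(BA) ≥ c₀⁻¹
    ((∀ v : H, ∃ f : ∀ j, V j, v = ∑ j, ((f j : H)) ∧
        ∑ j, ⟪((Rinv j (f j) : V j) : H), ((f j : H))⟫ ≤ c₀ * ⟪A v, v⟫) →
      ∀ v : H, c₀⁻¹ * ⟪A v, v⟫ ≤ ⟪A (B (A v)), v⟫) ∧
    -- (A2) boundedness implies λ_max(BA) ≤ c₁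
    ((∀ f : ∀ j, V j,
        ⟪A (∑ j, ((f j : H))), ∑ j, ((f j : H))⟫ ≤
          c₁ * ∑ j, ⟪((Rinv j (f j) : V j) : H), ((f j : H))⟫) →
      ∀ v : H, ⟪A (B (A v)), v⟫ ≤ c₁ * ⟪A v, v⟫) ∧
    -- consequently, under (A1) and (A2), cond(BA) ≤ c₀ c₁
    ((∀ v : H, ∃ f : ∀ j, V j, v = ∑ j, ((f j : H)) ∧
        ∑ j, ⟪((Rinv j (f j) : V j) : H), ((f j : H))⟫ ≤ c₀ * ⟪A v, v⟫) →
      (∀ f : ∀ j, V j,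
        ⟪A (∑ j, ((f j : H))), ∑ j, ((f j : H))⟫ ≤
          c₁ * ∑ j, ⟪((Rinv j (f j) : V j) : H), ((f j : H))⟫) →
      ∀ v w : H,
        ⟪A (B (A v)), v⟫ * ⟪A w, w⟫ ≤ c₀ * c₁ * (⟪A v, v⟫ * ⟪A (B (A w)), w⟫)) := by
  -- basic nonnegativity facts
  have hAnn : ∀ x : H, 0 ≤ ⟪A x, x⟫ := by
    intro x
    by_cases hx : x = 0
    · simp [hx]
    · exact (hApos x hx).le
  have hRnn : ∀ j (x : V j), 0 ≤ ⟪((R j x : V j) : H), (x : H)⟫ := by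
    intro j x
    by_cases hx : x = 0
    · simp [hx]
    · exact (hRpos j x hx).le
  -- inner product against an element of V j only sees the projection
  have hproj : ∀ j (w : V j) (u : H),
      ⟪(w : H), u⟫ = ⟪(w : H), (((V j).orthogonalProjection u : V j) : H)⟫ := by
    intro j w u
    have h := Submodule.starProjection_inner_eq_zero (K := V j) u (w : H) w.2
    rw [Submodule.starProjection_apply, inner_sub_left] at h
    have c1 := real_inner_comm ((w : H)) u
    have c2 := real_inner_comm ((w : H)) ((((V j).orthogonalProjection u : V j)) : H)
    linarith
  -- expression of the quadratic form of B
  have hBu : ∀ u : H, ⟪B u, u⟫ =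
      ∑ j, ⟪((R j ((V j).orthogonalProjection u) : V j) : H),
        (((V j).orthogonalProjection u : V j) : H)⟫ := by
    intro u
    rw [hB, sum_inner]
    exact Finset.sum_congr rfl fun j _ => hproj j _ u
  have hABA : ∀ v : H, ⟪A (B (A v)), v⟫ = ⟪B (A v), A v⟫ := by
    intro v
    rw [hAsymm (B (A v)) v]
  have hSnn : ∀ v : H, 0 ≤ ⟪A (B (A v)), v⟫ := by
    intro v
    rw [hABA v, hBu (A v)]
    exact Finset.sum_nonneg fun j _ => hRnn j _
  -- Cauchy-Schwarz for the R j's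
  have csR : ∀ j (x y : V j),
      ⟪((R j x : V j) : H), (y : H)⟫ ^ 2 ≤
        ⟪((R j x : V j) : H), (x : H)⟫ * ⟪((R j y : V j) : H), (y : H)⟫ := by
    intro j x y
    have := cs_op (R j)
      (fun a b => by rw [Submodule.coe_inner, Submodule.coe_inner]; exact hRsymm j a b)
      (fun a => by rw [Submodule.coe_inner]; exact hRnn j a) x y
    simpa [Submodule.coe_inner] using this
  -- Part (A1)
  have part1 : (∀ v : H, ∃ f : ∀ j, V j, v = ∑ j, ((f j : H)) ∧
        ∑ j, ⟪((Rinv j (f j) : V j) : H), ((f j : H))⟫ ≤ c₀ * ⟪A v, v⟫) →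
      ∀ v : H, c₀⁻¹ * ⟪A v, v⟫ ≤ ⟪A (B (A v)), v⟫ := by
    intro hA1 v
    obtain ⟨f, hdec, hbound⟩ := hA1 v
    set q : ℝ := ⟪A v, v⟫ with hqdef
    set S : ℝ := ⟪A (B (A v)), v⟫ with hSdef
    set uj : ∀ j, V j := fun j => (V j).orthogonalProjection (A v) with hujdef
    set gj : ∀ j, V j := fun j => Rinv j (f j) with hgjdef
    have hfg : ∀ j, R j (gj j) = f j := fun j => LinearMap.congr_fun (hRinv j).1 (f j)
    set a : Fin (J+1) → ℝ := fun j => ⟪((R j (uj j) : V j) : H), ((uj j : V j) : H)⟫ with hadef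
    set b : Fin (J+1) → ℝ := fun j => ⟪((Rinv j (f j) : V j) : H), ((f j : H))⟫ with hbdef
    have hinvR : ∀ j (x : V j), Rinv j (R j x) = x := by
      intro j x
      have := DFunLike.congr_fun (hRinv j).2 x
      simpa using this
    have hb' : ∀ j, b j = ⟪((R j (gj j) : V j) : H), ((gj j : V j) : H)⟫ := by
      intro j
      rw [hbdef]
      simp only
      rw [← hfg j, hinvR j (gj j)]
      exact real_inner_comm _ _
    have hb'' : ∀ j, b j = ⟪((f j : H)), ((gj j : V j) : H)⟫ := by
      intro j
      rw [hbdef]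
      exact real_inner_comm _ _
    have hbnn : ∀ j, 0 ≤ b j := fun j => (hb' j) ▸ hRnn j (gj j)
    have hann : ∀ j, 0 ≤ a j := fun j => hRnn j (uj j)
    set t : Fin (J+1) → ℝ := fun j => ⟪((f j : H)), ((uj j : V j) : H)⟫ with htdef
    have hq : q = ∑ j, t j := by
      have h1 : ⟪(∑ j, ((f j : H))), A v⟫ = ∑ j, t j := by
        rw [sum_inner]
        exact Finset.sum_congr rfl fun j _ => hproj j (f j) (A v)
      rw [← hdec] at h1
      rw [hqdef, real_inner_comm]
      exact h1
    have htab : ∀ j, t j ≤ Real.sqrt (a j) * Real.sqrt (b j) := by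
      intro j
      have h2 : t j ^ 2 ≤ b j * a j := by
        have h5 := csR j (gj j) (uj j)
        rw [hfg j] at h5
        rw [← hb'' j] at h5
        exact h5
      have hs : Real.sqrt (a j) * Real.sqrt (b j) = Real.sqrt (a j * b j) := by
        rw [Real.sqrt_mul (hann j)]
      rw [hs]
      nlinarith [Real.sq_sqrt (mul_nonneg (hann j) (hbnn j)), Real.sqrt_nonneg (a j * b j), h2]
    have hM : q ≤ ∑ j, Real.sqrt (a j) * Real.sqrt (b j) := by
      rw [hq]
      exact Finset.sum_le_sum fun j _ => htab j
    have hMsq : (∑ j, Real.sqrt (a j) * Real.sqrt (b j)) ^ 2 ≤ (∑ j, a j) * (∑ j, b j) := by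
      have := Finset.sum_mul_sq_le_sq_mul_sq Finset.univ (fun j => Real.sqrt (a j))
        (fun j => Real.sqrt (b j))
      calc (∑ j, Real.sqrt (a j) * Real.sqrt (b j)) ^ 2
          ≤ (∑ j, Real.sqrt (a j) ^ 2) * (∑ j, Real.sqrt (b j) ^ 2) := this
        _ = (∑ j, a j) * (∑ j, b j) := by
            congr 1
            · exact Finset.sum_congr rfl fun j _ => Real.sq_sqrt (hann j)
            · exact Finset.sum_congr rfl fun j _ => Real.sq_sqrt (hbnn j)
    have hSa : ∑ j, a j = S := by
      rw [hSdef, hABA v, hBu (A v)]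
    have hMnn : 0 ≤ ∑ j, Real.sqrt (a j) * Real.sqrt (b j) :=
      Finset.sum_nonneg fun j _ => mul_nonneg (Real.sqrt_nonneg _) (Real.sqrt_nonneg _)
    have hqnn : 0 ≤ q := hAnn v
    have hfinal : q * q ≤ S * (c₀ * q) := by
      have h3 : q ^ 2 ≤ (∑ j, Real.sqrt (a j) * Real.sqrt (b j)) ^ 2 := by
        nlinarith [hM, hqnn, hMnn]
      have h4 : (∑ j, a j) * (∑ j, b j) ≤ S * (c₀ * q) := by
        rw [hSa]
        exact mul_le_mul_of_nonneg_left hbound (hSnn v)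
      nlinarith [h3, hMsq, h4]
    have hkey : q ≤ c₀ * S := by
      nlinarith [hfinal, hqnn, hSnn v, hc₀, mul_nonneg hc₀.le (hSnn v)]
    calc c₀⁻¹ * q ≤ c₀⁻¹ * (c₀ * S) :=
          mul_le_mul_of_nonneg_left hkey (inv_nonneg.mpr hc₀.le)
      _ = S := by rw [inv_mul_cancel_left₀ hc₀.ne']
  -- Part (A2)
  have part2 : (∀ f : ∀ j, V j,
        ⟪A (∑ j, ((f j : H))), ∑ j, ((f j : H))⟫ ≤
          c₁ * ∑ j, ⟪((Rinv j (f j) : V j) : H), ((f j : H))⟫) →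
      ∀ v : H, ⟪A (B (A v)), v⟫ ≤ c₁ * ⟪A v, v⟫ := by
    intro hA2 v
    set fj : ∀ j, V j := fun j => R j ((V j).orthogonalProjection (A v)) with hfjdef
    have hsum : ∑ j, ((fj j : H)) = B (A v) := (hB (A v)).symm
    have hinv : ∀ j, Rinv j (fj j) = (V j).orthogonalProjection (A v) := by
      intro j
      have := DFunLike.congr_fun (hRinv j).2 ((V j).orthogonalProjection (A v))
      simpa using this
    have hS : ∑ j, ⟪((Rinv j (fj j) : V j) : H), ((fj j : H))⟫ = ⟪A (B (A v)), v⟫ := by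
      rw [hABA v, hBu (A v)]
      refine Finset.sum_congr rfl fun j _ => ?_
      rw [hinv j]
      exact real_inner_comm _ _
    have h2 := hA2 fj
    rw [hsum, hS] at h2
    have hcs := cs_op A hAsymm hAnn (B (A v)) v
    set S : ℝ := ⟪A (B (A v)), v⟫
    set q : ℝ := ⟪A v, v⟫
    nlinarith [hcs, h2, hSnn v, hAnn v, hc₁, mul_nonneg hc₁.le (hAnn v)]
  refine ⟨part1, part2, ?_⟩
  intro h1 h2 v w
  have hv := part2 h2 v
  have hw := part1 h1 w
  have hw' : ⟪A w, w⟫ ≤ c₀ * ⟪A (B (A w)), w⟫ := by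
    have := mul_le_mul_of_nonneg_left hw hc₀.le
    rwa [mul_inv_cancel_left₀ hc₀.ne'] at this
  nlinarith [hv, hw', hAnn v, hAnn w, hSnn v, hSnn w, hc₀, hc₁,
    mul_nonneg hc₁.le (hAnn v)]
end

section
/- Let V be a finite-dimensional inner product space with nested subspaces V_0 ⊂ V_1 ⊂ ... ⊂ V_J = V, Q_j the orthogonal projection onto V_j, Q_{-1} = 0, γ ∈ (0,1), and 0 < s ≤ 1. Then for every v ∈ V, Σ_{j=0}^J γ^{-2sj} ‖(Q_j - Q_{j-1})v‖² equals the infimum over all decompositions v = Σ_{j=0}^J v_j with v_j ∈ V_j of γ^{-2sJ}‖v_J‖² + Σ_{j=0}^{J-1} (γ^{-2sj}/(1-γ^{2s})) ‖v_j‖². -/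
open Finset

lemma stmt7_key {H : Type*} [NormedAddCommGroup H] [InnerProductSpace ℝ H]
    (J : ℕ) (V : ℕ → Submodule ℝ H) (hmono : Monotone V)
    (t : ℝ) (ht0 : 0 < t) (ht1 : t < 1) (v : H) (d : ℕ → H)
    (hdmem : ∀ j, d j ∈ V j)
    (hdperp : ∀ k, k ≠ 0 → ∀ w ∈ V (k-1), (inner ℝ w (d k) : ℝ) = 0)
    (hdsum : ∑ j ∈ range (J+1), d j = v) :
    ∑ j ∈ range (J+1), ((t:ℝ)^j)⁻¹ * ‖d j‖^2
      = sInf {r : ℝ | ∃ f : ℕ → H, (∀ j, f j ∈ V j) ∧ v = ∑ j ∈ range (J+1), f j ∧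
          r = ((t:ℝ)^J)⁻¹ * ‖f J‖^2 + ∑ j ∈ range J, ((t:ℝ)^j)⁻¹/(1-t) * ‖f j‖^2} := by
  classical
  have h1t : (0:ℝ) < 1 - t := by linarith
  have htp : ∀ k : ℕ, (0:ℝ) < t ^ k := fun k => pow_pos ht0 k
  -- pairwise orthogonality
  have horth : ∀ j k : ℕ, j < k → (inner ℝ (d j) (d k) : ℝ) = 0 := by
    intro j k hjk
    exact hdperp k (by omega) _ (hmono (by omega : j ≤ k - 1) (hdmem j))
  have hso : ∀ j k : ℕ, j ≠ k → (inner ℝ (d j) (d k) : ℝ) = 0 := by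
    intro j k hjk
    rcases lt_or_gt_of_ne hjk with h | h
    · exact horth j k h
    · rw [real_inner_comm]; exact horth k j h
  -- weights
  set W : ℕ → ℝ := fun j => if j = J then ((t:ℝ)^J)⁻¹ else ((t:ℝ)^j)⁻¹/(1-t) with hWdef
  have hWpos : ∀ j, 0 < W j := by
    intro j; simp only [hWdef]; split
    · exact inv_pos.2 (htp J)
    · exact div_pos (inv_pos.2 (htp j)) h1t
  have hWJ : W J = ((t:ℝ)^J)⁻¹ := by simp [hWdef]
  have hWinv : ∀ j, (W j)⁻¹ = if j = J then t^J else (1-t) * t^j := by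
    intro j; simp only [hWdef]; split
    · rw [inv_inv]
    · rw [inv_div, div_eq_mul_inv, inv_inv]
  -- geometric identity
  have hgeo : ∀ k, k ∈ range (J+1) → ∑ j ∈ Ico k (J+1), (W j)⁻¹ = t^k := by
    intro k hk
    have hkJ : k ≤ J := by simpa using Nat.lt_succ_iff.mp (mem_range.mp hk)
    rw [Finset.sum_Ico_succ_top (by omega : k ≤ J)]
    have h1 : ∀ j ∈ Ico k J, (W j)⁻¹ = (1-t) * t^j := by
      intro j hj
      rw [hWinv, if_neg (mem_Ico.mp hj).2.ne]
    have hWJ' : (W J)⁻¹ = t^J := by rw [hWJ, inv_inv]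
    rw [Finset.sum_congr rfl h1, hWJ', ← Finset.mul_sum, geom_sum_Ico ht1.ne hkJ]
    have ht1' : t - 1 ≠ 0 := by intro h; apply ht1.ne; linarith
    field_simp
    ring
  -- the g vectors
  set g : ℕ → H := fun j => ∑ k ∈ range (j+1), ((t:ℝ)^k)⁻¹ • d k with hgdef
  have hgmem : ∀ j, g j ∈ V j := by
    intro j
    exact sum_mem fun k hk =>
      Submodule.smul_mem _ _ (hmono (Nat.lt_succ_iff.mp (mem_range.mp hk)) (hdmem k))
  have hdg : ∀ k j : ℕ, k ∈ range (j+1) → (inner ℝ (d k) (g j) : ℝ) = ((t:ℝ)^k)⁻¹ * ‖d k‖^2 := by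
    intro k j hk
    simp only [hgdef]
    rw [inner_sum, Finset.sum_eq_single_of_mem k hk]
    · rw [real_inner_smul_right, real_inner_self_eq_norm_sq]
    · intro l hl hlk
      rw [real_inner_smul_right, hso k l (Ne.symm hlk), mul_zero]
  have hginner : ∀ (j : ℕ) (x : H),
      (inner ℝ (g j) x : ℝ) = ∑ k ∈ range (j+1), ((t:ℝ)^k)⁻¹ * (inner ℝ (d k) x : ℝ) := by
    intro j x
    simp only [hgdef, sum_inner, real_inner_smul_left]
  have hgnorm : ∀ j, ‖g j‖^2 = ∑ k ∈ range (j+1), (((t:ℝ)^k)⁻¹)^2 * ‖d k‖^2 := by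
    intro j
    rw [← real_inner_self_eq_norm_sq, hginner]
    refine Finset.sum_congr rfl fun k hk => ?_
    rw [hdg k j hk]
    ring
  -- swap lemma (scalar)
  have hswap : ∀ e : ℕ → ℝ,
      ∑ j ∈ range (J+1), ∑ k ∈ range (j+1), (W j)⁻¹ * e k
        = ∑ k ∈ range (J+1), t^k * e k := by
    intro e
    simp only [← Nat.Ico_zero_eq_range]
    rw [← Finset.sum_Ico_Ico_comm 0 (J+1) (fun k j => (W j)⁻¹ * e k)]
    refine Finset.sum_congr rfl fun k hk => ?_
    rw [← Finset.sum_mul, hgeo k (by simpa [Nat.Ico_zero_eq_range] using hk), mul_comm]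
  -- swap lemma (vector)
  have hswapv : ∑ j ∈ range (J+1), (W j)⁻¹ • g j = v := by
    simp only [hgdef, Finset.smul_sum]
    rw [← hdsum]
    simp only [← Nat.Ico_zero_eq_range]
    rw [← Finset.sum_Ico_Ico_comm 0 (J+1) (fun k j => (W j)⁻¹ • (((t:ℝ)^k)⁻¹ • d k))]
    refine Finset.sum_congr rfl fun k hk => ?_
    rw [← Finset.sum_smul, hgeo k (by simpa [Nat.Ico_zero_eq_range] using hk), smul_smul,
      mul_inv_cancel₀ (htp k).ne', one_smul]
  -- objective rewriting
  have hobj : ∀ f : ℕ → H,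
      ((t:ℝ)^J)⁻¹ * ‖f J‖^2 + ∑ j ∈ range J, ((t:ℝ)^j)⁻¹/(1-t) * ‖f j‖^2
        = ∑ j ∈ range (J+1), W j * ‖f j‖^2 := by
    intro f
    rw [Finset.sum_range_succ]
    have h1 : ∀ j ∈ range J, W j * ‖f j‖^2 = ((t:ℝ)^j)⁻¹/(1-t) * ‖f j‖^2 := by
      intro j hj
      simp only [hWdef]; rw [if_neg (mem_range.mp hj).ne]
    rw [Finset.sum_congr rfl h1, hWJ]
    ring
  -- P = S
  have hP : ∑ j ∈ range (J+1), (W j)⁻¹ * ‖g j‖^2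
      = ∑ j ∈ range (J+1), ((t:ℝ)^j)⁻¹ * ‖d j‖^2 := by
    calc ∑ j ∈ range (J+1), (W j)⁻¹ * ‖g j‖^2
        = ∑ j ∈ range (J+1), ∑ k ∈ range (j+1), (W j)⁻¹ * ((((t:ℝ)^k)⁻¹)^2 * ‖d k‖^2) := by
          refine Finset.sum_congr rfl fun j hj => ?_
          rw [hgnorm, Finset.mul_sum]
      _ = ∑ k ∈ range (J+1), t^k * ((((t:ℝ)^k)⁻¹)^2 * ‖d k‖^2) := hswap _
      _ = ∑ k ∈ range (J+1), ((t:ℝ)^k)⁻¹ * ‖d k‖^2 := by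
          refine Finset.sum_congr rfl fun k hk => ?_
          have := (htp k).ne'
          field_simp
  -- the attaining decomposition
  set f0 : ℕ → H := fun j => if j ≤ J then (W j)⁻¹ • g j else 0 with hf0def
  have hf0mem : ∀ j, f0 j ∈ V j := by
    intro j
    simp only [hf0def]
    split
    · exact Submodule.smul_mem _ _ (hgmem j)
    · exact zero_mem _
  have hf0sum : v = ∑ j ∈ range (J+1), f0 j := by
    rw [← hswapv]
    refine Finset.sum_congr rfl fun j hj => ?_
    simp only [hf0def]
    rw [if_pos (Nat.lt_succ_iff.mp (mem_range.mp hj))]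
  have hf0val : ∑ j ∈ range (J+1), W j * ‖f0 j‖^2
      = ∑ j ∈ range (J+1), ((t:ℝ)^j)⁻¹ * ‖d j‖^2 := by
    rw [← hP]
    refine Finset.sum_congr rfl fun j hj => ?_
    simp only [hf0def]
    rw [if_pos (Nat.lt_succ_iff.mp (mem_range.mp hj))]
    rw [norm_smul, Real.norm_eq_abs, abs_of_pos (inv_pos.2 (hWpos j)), mul_pow]
    have := (hWpos j).ne'
    field_simp
  set S : ℝ := ∑ j ∈ range (J+1), ((t:ℝ)^j)⁻¹ * ‖d j‖^2 with hSdef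
  have hSmem : S ∈ {r : ℝ | ∃ f : ℕ → H, (∀ j, f j ∈ V j) ∧ v = ∑ j ∈ range (J+1), f j ∧
      r = ((t:ℝ)^J)⁻¹ * ‖f J‖^2 + ∑ j ∈ range J, ((t:ℝ)^j)⁻¹/(1-t) * ‖f j‖^2} := by
    exact ⟨f0, hf0mem, hf0sum, by rw [hobj f0, hf0val]⟩
  have hSnn : 0 ≤ S := by
    refine Finset.sum_nonneg fun j hj => ?_
    positivity
  -- lower bound
  have hlb : ∀ r ∈ {r : ℝ | ∃ f : ℕ → H, (∀ j, f j ∈ V j) ∧ v = ∑ j ∈ range (J+1), f j ∧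
      r = ((t:ℝ)^J)⁻¹ * ‖f J‖^2 + ∑ j ∈ range J, ((t:ℝ)^j)⁻¹/(1-t) * ‖f j‖^2}, S ≤ r := by
    rintro r ⟨f, hfmem, hfv, rfl⟩
    rw [hobj f]
    set T : ℝ := ∑ j ∈ range (J+1), W j * ‖f j‖^2 with hTdef
    have hTnn : 0 ≤ T := by
      refine Finset.sum_nonneg fun j hj => ?_
      have := (hWpos j).le
      positivity
    -- S = ∑_j ⟪g j, f j⟫
    have hfd : ∀ k, k ∈ range (J+1) →
        ‖d k‖^2 = ∑ j ∈ Ico k (J+1), (inner ℝ (d k) (f j) : ℝ) := by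
      intro k hk
      have h1 : (inner ℝ (d k) v : ℝ) = ‖d k‖^2 := by
        rw [← hdsum, inner_sum, Finset.sum_eq_single_of_mem k hk]
        · exact real_inner_self_eq_norm_sq _
        · intro l hl hlk
          exact hso k l (Ne.symm hlk)
      have h2 : (inner ℝ (d k) v : ℝ) = ∑ j ∈ range (J+1), (inner ℝ (d k) (f j) : ℝ) := by
        rw [hfv, inner_sum]
      have h3 : ∑ j ∈ Ico 0 k, (inner ℝ (d k) (f j) : ℝ) = 0 := by
        refine Finset.sum_eq_zero fun j hj => ?_
        have hjk : j < k := (mem_Ico.mp hj).2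
        rw [real_inner_comm]
        exact hdperp k (by omega) _ (hmono (by omega : j ≤ k - 1) (hfmem j))
      have h4 : ∑ j ∈ Ico 0 k, (inner ℝ (d k) (f j) : ℝ)
          + ∑ j ∈ Ico k (J+1), (inner ℝ (d k) (f j) : ℝ)
          = ∑ j ∈ Ico 0 (J+1), (inner ℝ (d k) (f j) : ℝ) :=
        Finset.sum_Ico_consecutive _ (Nat.zero_le k)
          ((mem_range.mp hk).le)
      rw [← h1, h2, ← Nat.Ico_zero_eq_range, ← h4, h3, zero_add]
    have hSgf : S = ∑ j ∈ range (J+1), (inner ℝ (g j) (f j) : ℝ) := by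
      calc S = ∑ k ∈ range (J+1), ((t:ℝ)^k)⁻¹
            * ∑ j ∈ Ico k (J+1), (inner ℝ (d k) (f j) : ℝ) := by
            rw [hSdef]
            exact Finset.sum_congr rfl fun k hk => by rw [← hfd k hk]
        _ = ∑ k ∈ range (J+1), ∑ j ∈ Ico k (J+1), ((t:ℝ)^k)⁻¹ * (inner ℝ (d k) (f j) : ℝ) := by
            exact Finset.sum_congr rfl fun k hk => Finset.mul_sum _ _ _
        _ = ∑ j ∈ range (J+1), ∑ k ∈ range (j+1), ((t:ℝ)^k)⁻¹ * (inner ℝ (d k) (f j) : ℝ) := by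
            simp only [← Nat.Ico_zero_eq_range]
            exact Finset.sum_Ico_Ico_comm 0 (J+1)
              (fun k j => ((t:ℝ)^k)⁻¹ * (inner ℝ (d k) (f j) : ℝ))
        _ = ∑ j ∈ range (J+1), (inner ℝ (g j) (f j) : ℝ) := by
            exact Finset.sum_congr rfl fun j hj => (hginner j (f j)).symm
    have hcs1 : S ≤ ∑ j ∈ range (J+1), ‖g j‖ * ‖f j‖ := by
      rw [hSgf]
      exact Finset.sum_le_sum fun j hj => real_inner_le_norm _ _
    have hprod : ∀ j, (Real.sqrt ((W j)⁻¹) * ‖g j‖) * (Real.sqrt (W j) * ‖f j‖)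
        = ‖g j‖ * ‖f j‖ := by
      intro j
      have : Real.sqrt ((W j)⁻¹) * Real.sqrt (W j) = 1 := by
        rw [← Real.sqrt_mul (inv_pos.2 (hWpos j)).le, inv_mul_cancel₀ (hWpos j).ne',
          Real.sqrt_one]
      calc (Real.sqrt ((W j)⁻¹) * ‖g j‖) * (Real.sqrt (W j) * ‖f j‖)
          = (Real.sqrt ((W j)⁻¹) * Real.sqrt (W j)) * (‖g j‖ * ‖f j‖) := by ring
        _ = ‖g j‖ * ‖f j‖ := by rw [this, one_mul]
    have hcs2 : (∑ j ∈ range (J+1), ‖g j‖ * ‖f j‖)^2 ≤ S * T := by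
      have := Finset.sum_mul_sq_le_sq_mul_sq (range (J+1))
        (fun j => Real.sqrt ((W j)⁻¹) * ‖g j‖) (fun j => Real.sqrt (W j) * ‖f j‖)
      simp only [hprod] at this
      have e1 : ∑ j ∈ range (J+1), (Real.sqrt ((W j)⁻¹) * ‖g j‖)^2 = S := by
        rw [← hP]
        refine Finset.sum_congr rfl fun j hj => ?_
        rw [mul_pow, Real.sq_sqrt (inv_pos.2 (hWpos j)).le]
      have e2 : ∑ j ∈ range (J+1), (Real.sqrt (W j) * ‖f j‖)^2 = T := by
        refine Finset.sum_congr rfl fun j hj => ?_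
        rw [mul_pow, Real.sq_sqrt (hWpos j).le]
      rwa [e1, e2] at this
    -- conclude S ≤ T
    rcases eq_or_lt_of_le hSnn with h0 | h0
    · linarith
    · have h5 : S^2 ≤ S * T := le_trans (pow_le_pow_left₀ hSnn hcs1 2) hcs2
      have : S * S ≤ S * T := by nlinarith
      exact le_of_mul_le_mul_left this h0
  exact le_antisymm (le_csInf ⟨S, hSmem⟩ hlb) (csInf_le ⟨S, hlb⟩ hSmem)
theorem stmt_7 {H : Type*} [NormedAddCommGroup H] [InnerProductSpace ℝ H]
    [FiniteDimensional ℝ H]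
    (J : ℕ) (V : ℕ → Submodule ℝ H) (hnest : ∀ j, V j ≤ V (j+1)) (htop : V J = ⊤)
    (γ s : ℝ) (hγ0 : 0 < γ) (hγ1 : γ < 1) (hs0 : 0 < s) (hs1 : s ≤ 1) (v : H) :
    ∑ j ∈ Finset.range (J+1), γ ^ (-2*s*(j:ℝ)) *
        ‖(if j = 0 then ((Submodule.orthogonalProjectionOnto (V 0) v : V 0) : H)
          else ((Submodule.orthogonalProjectionOnto (V j) v : V j) : H)
            - ((Submodule.orthogonalProjectionOnto (V (j-1)) v : V (j-1)) : H))‖^2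
      = sInf { r : ℝ | ∃ f : ℕ → H, (∀ j, f j ∈ V j) ∧ v = ∑ j ∈ Finset.range (J+1), f j ∧
          r = γ ^ (-2*s*(J:ℝ)) * ‖f J‖^2
            + ∑ j ∈ Finset.range J, γ ^ (-2*s*(j:ℝ)) / (1 - γ ^ (2*s)) * ‖f j‖^2 } := by
  have hmono : Monotone V := monotone_nat_of_le_succ hnest
  have ht0 : (0:ℝ) < γ ^ (2*s) := Real.rpow_pos_of_pos hγ0 _
  have ht1 : γ ^ (2*s) < 1 := Real.rpow_lt_one hγ0.le hγ1 (by positivity)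
  have ha : ∀ j : ℕ, γ ^ (-2*s*(j:ℝ)) = ((γ ^ (2*s) : ℝ)^j)⁻¹ := by
    intro j
    rw [show (-2)*s*(j:ℝ) = -((2*s)*(j:ℝ)) by ring, Real.rpow_neg hγ0.le,
      Real.rpow_mul hγ0.le, Real.rpow_natCast]
  simp only [ha]
  set d : ℕ → H := fun j => if j = 0 then ((Submodule.orthogonalProjectionOnto (V 0) v : V 0) : H)
    else ((Submodule.orthogonalProjectionOnto (V j) v : V j) : H)
      - ((Submodule.orthogonalProjectionOnto (V (j-1)) v : V (j-1)) : H) with hddef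
  have hdmem : ∀ j, d j ∈ V j := by
    intro j
    simp only [hddef]
    split_ifs with h
    · subst h; exact SetLike.coe_mem _
    · exact sub_mem (SetLike.coe_mem _) (hmono (Nat.sub_le j 1) (SetLike.coe_mem _))
  have hdperp : ∀ k, k ≠ 0 → ∀ w ∈ V (k-1), (inner ℝ w (d k) : ℝ) = 0 := by
    intro k hk w hw
    have h1 : v - ((Submodule.orthogonalProjectionOnto (V (k-1)) v : V (k-1)) : H) ∈ (V (k-1))ᗮ :=
      Submodule.sub_starProjection_mem_orthogonal v
    have h2 : v - ((Submodule.orthogonalProjectionOnto (V k) v : V k) : H) ∈ (V (k-1))ᗮ :=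
      Submodule.orthogonal_le (hmono (Nat.sub_le k 1))
        (Submodule.sub_starProjection_mem_orthogonal v)
    have h3 : d k ∈ (V (k-1))ᗮ := by
      have he : d k = (v - ((Submodule.orthogonalProjectionOnto (V (k-1)) v : V (k-1)) : H))
          - (v - ((Submodule.orthogonalProjectionOnto (V k) v : V k) : H)) := by
        simp only [hddef]; rw [if_neg hk]; abel
      rw [he]; exact sub_mem h1 h2
    exact h3 w hw
  have hproj : ∀ n : ℕ, ∑ j ∈ Finset.range (n+1), d j
      = ((Submodule.orthogonalProjectionOnto (V n) v : V n) : H) := by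
    intro n
    induction n with
    | zero => simp [hddef]
    | succ n ih =>
      rw [Finset.sum_range_succ, ih]
      simp only [hddef]
      rw [if_neg (Nat.succ_ne_zero n)]
      simp
  have hdsum : ∑ j ∈ Finset.range (J+1), d j = v := by
    rw [hproj J, show ((Submodule.orthogonalProjectionOnto (V J) v : V J) : H) = v from
      Submodule.starProjection_eq_self_iff.mpr (by rw [htop]; trivial)]
  exact stmt7_key J V hmono _ ht0 ht1 v d hdmem hdperp hdsum
end

section
/- Let w₀, w₁ : Ω → (0,∞) be measurable weights on a measure space Ω, and for a weight w let E(w) be the weighted L² space with norm (∫_Ω |v|² w)^{1/2}. Then for every s ∈ (0,1), the real interpolation space (E(w₀), E(w₁))_{s,2} equals E(w_s) with w_s = w₀^{1-s} w₁^s, and the interpolation norm (with the normalization factor 2 sin(πs)/π in front of ∫₀^∞ t^{-1-2s}K₂(t,v)² dt) is equivalent to the E(w_s)-norm with equivalence constants independent of s. -/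
open MeasureTheory Real ENNReal Set

/-- The modified `K₂`-functional squared for the couple of weighted `L²` spaces
`(E(w0), E(w1))`, computed in `ℝ≥0∞`. -/
noncomputable def wK2sq {Ω : Type*} [MeasurableSpace Ω] (μ : Measure Ω)
    (w0 w1 : Ω → ℝ) (t : ℝ) (v : Ω → ℝ) : ℝ≥0∞ :=
  sInf { r : ℝ≥0∞ | ∃ v0 v1 : Ω → ℝ, Measurable v0 ∧ Measurable v1 ∧ v = v0 + v1 ∧
    r = (∫⁻ x, ENNReal.ofReal ((v0 x)^2 * w0 x) ∂μ)
      + ENNReal.ofReal (t^2) * ∫⁻ x, ENNReal.ofReal ((v1 x)^2 * w1 x) ∂μ }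


lemma sin_lb_half {s : ℝ} (h0 : 0 ≤ s) (h2 : s ≤ 1/2) : 2*s ≤ Real.sin (π*s) := by
  have hc := strictConcaveOn_sin_Icc.concaveOn.2
    (show (0:ℝ) ∈ Icc 0 π from ⟨le_refl 0, pi_pos.le⟩)
    (show π/2 ∈ Icc 0 π from ⟨by positivity, by linarith [pi_pos]⟩)
    (show (0:ℝ) ≤ 1 - 2*s by linarith) (show (0:ℝ) ≤ 2*s by linarith) (by ring)
  simp only [smul_eq_mul, mul_zero, zero_add, Real.sin_zero, Real.sin_pi_div_two, mul_one] at hc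
  have : 2*s*(π/2) = π*s := by ring
  rw [this] at hc
  linarith

lemma sin_lb {s : ℝ} (h0 : 0 < s) (h1 : s < 1) : 2*s*(1-s) ≤ Real.sin (π*s) := by
  rcases le_or_gt s (1/2) with h | h
  · have := sin_lb_half h0.le h
    nlinarith
  · have hs := sin_lb_half (s := 1-s) (by linarith) (by linarith)
    rw [show π*(1-s) = π - π*s by ring, Real.sin_pi_sub] at hs
    nlinarith

lemma sin_ub {s : ℝ} (h0 : 0 < s) (h1 : s < 1) : Real.sin (π*s) ≤ 2*π*s*(1-s) := by
  rcases le_or_gt s (1/2) with h | h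
  · have := Real.sin_le (x := π*s) (by positivity)
    have key : 0 ≤ (π*s)*(1-2*s) := mul_nonneg (by positivity) (by linarith)
    nlinarith [key]
  · have hs := Real.sin_le (x := π*(1-s)) (by nlinarith [pi_pos])
    rw [show π*(1-s) = π - π*s by ring, Real.sin_pi_sub] at hs
    nlinarith [mul_nonneg (mul_nonneg pi_pos.le (show (0:ℝ) ≤ 1-s by linarith)) (show (0:ℝ) ≤ 2*s-1 by linarith)]

lemma lint_Ioc {a b : ℝ} (ha : -1 < a) (hb : 0 < b) :
    ∫⁻ t in Ioc 0 b, ENNReal.ofReal (t ^ a) = ENNReal.ofReal (b^(a+1)/(a+1)) := by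
  have h1 : IntegrableOn (fun t : ℝ => t ^ a) (Ioc 0 b) := by
    rw [← intervalIntegrable_iff_integrableOn_Ioc_of_le hb.le]
    exact intervalIntegral.intervalIntegrable_rpow' ha
  have h2 : 0 ≤ᶠ[ae (volume.restrict (Ioc 0 b))] fun t : ℝ => t ^ a := by
    refine (ae_restrict_iff' measurableSet_Ioc).2 (ae_of_all _ fun t ht => ?_)
    exact Real.rpow_nonneg ht.1.le a
  rw [← ofReal_integral_eq_lintegral_ofReal h1 h2,
    ← intervalIntegral.integral_of_le hb.le, integral_rpow (Or.inl ha),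
    Real.zero_rpow (by linarith), sub_zero]

lemma lint_Ioi {a b : ℝ} (ha : a < -1) (hb : 0 < b) :
    ∫⁻ t in Ioi b, ENNReal.ofReal (t ^ a) = ENNReal.ofReal (b^(a+1)/(-(a+1))) := by
  have h1 : IntegrableOn (fun t : ℝ => t ^ a) (Ioi b) := integrableOn_Ioi_rpow_of_lt ha hb
  have h2 : 0 ≤ᶠ[ae (volume.restrict (Ioi b))] fun t : ℝ => t ^ a := by
    refine (ae_restrict_iff' measurableSet_Ioi).2 (ae_of_all _ fun t ht => ?_)
    exact Real.rpow_nonneg (hb.trans ht).le a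
  rw [← ofReal_integral_eq_lintegral_ofReal h1 h2, integral_Ioi_rpow_of_lt ha hb]
  congr 1
  rw [neg_div, div_neg]

lemma combine_int {Ω : Type*} [MeasurableSpace Ω] (μ : Measure Ω) (w0 w1 : Ω → ℝ)
    (hw0m : Measurable w0) (hw0 : ∀ x, 0 < w0 x) (hw1 : ∀ x, 0 < w1 x)
    (t : ℝ) (v0 v1 : Ω → ℝ) (h0 : Measurable v0) :
    (∫⁻ x, ENNReal.ofReal ((v0 x)^2 * w0 x) ∂μ)
      + ENNReal.ofReal (t^2) * ∫⁻ x, ENNReal.ofReal ((v1 x)^2 * w1 x) ∂μ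
    = ∫⁻ x, ENNReal.ofReal ((v0 x)^2 * w0 x + t^2 * ((v1 x)^2 * w1 x)) ∂μ := by
  rw [← lintegral_const_mul' _ _ ofReal_ne_top,
    ← lintegral_add_left (show Measurable (fun x => ENNReal.ofReal ((v0 x)^2 * w0 x)) from ((h0.pow_const 2).mul hw0m).ennreal_ofReal)]
  congr 1; funext x
  rw [← ENNReal.ofReal_mul (sq_nonneg t),
    ← ENNReal.ofReal_add (mul_nonneg (sq_nonneg _) (hw0 x).le)
      (mul_nonneg (sq_nonneg t) (mul_nonneg (sq_nonneg _) (hw1 x).le))]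

lemma wK2sq_eq {Ω : Type*} [MeasurableSpace Ω] (μ : Measure Ω)
    (w0 w1 : Ω → ℝ) (hw0m : Measurable w0) (hw1m : Measurable w1)
    (hw0 : ∀ x, 0 < w0 x) (hw1 : ∀ x, 0 < w1 x)
    {t : ℝ} (ht : 0 < t) (v : Ω → ℝ) (hv : Measurable v) :
    wK2sq μ w0 w1 t v
      = ∫⁻ x, ENNReal.ofReal ((v x)^2 * (t^2 * (w0 x * w1 x) / (w0 x + t^2 * w1 x))) ∂μ := by
  have hg : ∀ x, 0 < w0 x + t^2 * w1 x :=
    fun x => add_pos (hw0 x) (mul_pos (pow_pos ht 2) (hw1 x))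
  apply le_antisymm
  · set v0 : Ω → ℝ := fun x => v x * (t^2 * w1 x / (w0 x + t^2 * w1 x)) with hv0def
    set v1 : Ω → ℝ := fun x => v x * (w0 x / (w0 x + t^2 * w1 x)) with hv1def
    have hm0 : Measurable v0 :=
      hv.mul ((measurable_const.mul hw1m).div (hw0m.add (measurable_const.mul hw1m)))
    have hm1 : Measurable v1 := hv.mul (hw0m.div (hw0m.add (measurable_const.mul hw1m)))
    have hdec : v = v0 + v1 := by
      funext x
      have h := (hg x).ne'
      simp only [hv0def, hv1def, Pi.add_apply]
      field_simp
      ring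
    refine sInf_le ⟨v0, v1, hm0, hm1, hdec, ?_⟩
    rw [combine_int μ w0 w1 hw0m hw0 hw1 t v0 v1 hm0]
    congr 1; funext x
    congr 1
    have h := (hg x).ne'
    simp only [hv0def, hv1def]
    field_simp
    ring
  · refine le_sInf ?_
    rintro r ⟨v0, v1, h0, h1, hsum, rfl⟩
    rw [combine_int μ w0 w1 hw0m hw0 hw1 t v0 v1 h0]
    refine lintegral_mono fun x => ENNReal.ofReal_le_ofReal ?_
    have hvx : v x = v0 x + v1 x := by rw [hsum]; rfl
    rw [hvx, mul_div_assoc', div_le_iff₀ (hg x)]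
    nlinarith [sq_nonneg (v0 x * w0 x - v1 x * (t^2 * w1 x)), sq_nonneg (v0 x + v1 x),
      mul_pos (pow_pos ht 2) (hw1 x), (hw0 x)]

lemma rpow_expand {t : ℝ} (ht : 0 < t) (s : ℝ) : t ^ (1-2*s) / t^2 = t ^ (-1-2*s) := by
  rw [div_eq_iff (by positivity : (t:ℝ)^2 ≠ 0), ← Real.rpow_natCast t 2, ← Real.rpow_add ht]
  congr 1
  push_cast
  ring

lemma alg_A {s P Q : ℝ} (h0 : 0 < s) (h1 : s < 1) (hP : 0 < P) (hQ : 0 < Q) :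
    Real.sqrt (P/Q) ^ (2-2*s) = P^(1-s) * Q^s / Q := by
  have hQs : Q^s * Q^(1-s) = Q := by rw [← Real.rpow_add hQ]; norm_num
  have h : Real.sqrt (P/Q) ^ (2-2*s) = P^(1-s) / Q^(1-s) := by
    rw [Real.sqrt_eq_rpow, ← Real.rpow_mul (by positivity),
      show (1/2)*(2-2*s) = 1-s by ring, Real.div_rpow hP.le hQ.le]
  rw [h]
  have hne : Q^(1-s) ≠ 0 := (Real.rpow_pos_of_pos hQ _).ne'
  field_simp
  linear_combination (-1:ℝ) * hQs

lemma alg_B {s P Q : ℝ} (h0 : 0 < s) (h1 : s < 1) (hP : 0 < P) (hQ : 0 < Q) :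
    Real.sqrt (P/Q) ^ (-(2*s)) = P^(1-s) * Q^s / P := by
  have hPs : P^s * P^(1-s) = P := by rw [← Real.rpow_add hP]; norm_num
  have h : Real.sqrt (P/Q) ^ (-(2*s)) = Q^s / P^s := by
    rw [Real.sqrt_eq_rpow, ← Real.rpow_mul (by positivity),
      show (1/2)*(-(2*s)) = -s by ring, Real.rpow_neg (by positivity),
      Real.div_rpow hP.le hQ.le, inv_div]
  rw [h]
  have hne : P^s ≠ 0 := (Real.rpow_pos_of_pos hP _).ne'
  field_simp
  linear_combination (-1:ℝ) * hPs

lemma inner_bounds {s P Q : ℝ} (h0 : 0 < s) (h1 : s < 1) (hP : 0 < P) (hQ : 0 < Q) :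
    ENNReal.ofReal (P^(1-s)*Q^s * (1/(4*s*(1-s))))
      ≤ (∫⁻ t in Ioi (0:ℝ), ENNReal.ofReal (t^(1-2*s) * (P*Q/(P + t^2*Q)))) ∧
    (∫⁻ t in Ioi (0:ℝ), ENNReal.ofReal (t^(1-2*s) * (P*Q/(P + t^2*Q))))
      ≤ ENNReal.ofReal (P^(1-s)*Q^s * (1/(2*s*(1-s)))) := by
  have hs1 : (0:ℝ) < 1 - s := by linarith
  set α := Real.sqrt (P/Q) with hαdef
  have hα : 0 < α := Real.sqrt_pos.2 (by positivity)
  have hα2 : α^2 = P/Q := Real.sq_sqrt (by positivity)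
  have hsplit : ∀ f : ℝ → ℝ≥0∞, ∫⁻ t in Ioi (0:ℝ), f t
      = (∫⁻ t in Ioc 0 α, f t) + ∫⁻ t in Ioi α, f t := by
    intro f
    rw [← Set.Ioc_union_Ioi_eq_Ioi hα.le,
      lintegral_union measurableSet_Ioi (Set.Ioc_disjoint_Ioi le_rfl)]
  have hIoc : ∀ c : ℝ, 0 ≤ c → (∫⁻ t in Ioc 0 α, ENNReal.ofReal (c * t^(1-2*s)))
      = ENNReal.ofReal (c * (α^(2-2*s)/(2-2*s))) := by
    intro c hc
    simp_rw [ENNReal.ofReal_mul hc]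
    rw [lintegral_const_mul' _ _ ofReal_ne_top,
      lint_Ioc (show (-1:ℝ) < 1-2*s by linarith) hα, show 1-2*s+1 = 2-2*s by ring,
      ← ENNReal.ofReal_mul hc]
  have hIoi : ∀ c : ℝ, 0 ≤ c → (∫⁻ t in Ioi α, ENNReal.ofReal (c * t^(-1-2*s)))
      = ENNReal.ofReal (c * (α^(-(2*s))/(2*s))) := by
    intro c hc
    simp_rw [ENNReal.ofReal_mul hc]
    rw [lintegral_const_mul' _ _ ofReal_ne_top,
      lint_Ioi (show (-1-2*s:ℝ) < -1 by linarith) hα,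
      show -1-2*s+1 = -(2*s) by ring, neg_neg, ← ENNReal.ofReal_mul hc]
  have hfm : Measurable fun t : ℝ => ENNReal.ofReal (t^(1-2*s) * (P*Q/(P + t^2*Q))) := by
    fun_prop
  have hg1m : Measurable fun t : ℝ => ENNReal.ofReal (Q * t^(1-2*s)) := by fun_prop
  have hg2m : Measurable fun t : ℝ => ENNReal.ofReal (P * t^(-1-2*s)) := by fun_prop
  -- pointwise bounds
  have hub1 : ∀ t ∈ Ioc (0:ℝ) α, t^(1-2*s)*(P*Q/(P+t^2*Q)) ≤ Q * t^(1-2*s) := by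
    intro t ht
    have ht0 : 0 < t := ht.1
    have hd : 0 < P + t^2*Q := by positivity
    rw [mul_comm Q _]
    refine mul_le_mul_of_nonneg_left ?_ (Real.rpow_nonneg ht0.le _)
    rw [div_le_iff₀ hd]
    nlinarith [mul_nonneg (mul_nonneg hQ.le (sq_nonneg t)) hQ.le]
  have htle : ∀ t ∈ Ioc (0:ℝ) α, t^2*Q ≤ P := by
    intro t ht
    have h2 : t^2 ≤ α^2 := by nlinarith [ht.1, ht.2]
    rw [hα2] at h2
    calc t^2*Q ≤ (P/Q)*Q := by nlinarith
    _ = P := by field_simp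
  have hlb1 : ∀ t ∈ Ioc (0:ℝ) α, (Q/2) * t^(1-2*s) ≤ t^(1-2*s)*(P*Q/(P+t^2*Q)) := by
    intro t ht
    have ht0 : 0 < t := ht.1
    have hd : 0 < P + t^2*Q := by positivity
    rw [mul_comm (Q/2) _]
    refine mul_le_mul_of_nonneg_left ?_ (Real.rpow_nonneg ht0.le _)
    rw [div_le_div_iff₀ (by norm_num) hd]
    nlinarith [htle t ht]
  have htge : ∀ t ∈ Ioi α, P ≤ t^2*Q := by
    intro t ht
    have ht' : α < t := ht
    have h2 : α^2 ≤ t^2 := by nlinarith [hα]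
    rw [hα2] at h2
    calc P = (P/Q)*Q := by field_simp
    _ ≤ t^2*Q := by nlinarith
  have hub2 : ∀ t ∈ Ioi α, t^(1-2*s)*(P*Q/(P+t^2*Q)) ≤ P * t^(-1-2*s) := by
    intro t ht
    have ht0 : 0 < t := hα.trans ht
    have hd : 0 < P + t^2*Q := by positivity
    rw [← rpow_expand ht0, show P * (t^(1-2*s)/t^2) = t^(1-2*s) * (P/t^2) by ring]
    refine mul_le_mul_of_nonneg_left ?_ (Real.rpow_nonneg ht0.le _)
    rw [div_le_div_iff₀ hd (by positivity)]
    nlinarith [sq_nonneg P]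
  have hlb2 : ∀ t ∈ Ioi α, (P/2) * t^(-1-2*s) ≤ t^(1-2*s)*(P*Q/(P+t^2*Q)) := by
    intro t ht
    have ht0 : 0 < t := hα.trans ht
    have hd : 0 < P + t^2*Q := by positivity
    rw [← rpow_expand ht0, show P/2 * (t^(1-2*s)/t^2) = t^(1-2*s) * (P/(2*t^2)) by ring]
    refine mul_le_mul_of_nonneg_left ?_ (Real.rpow_nonneg ht0.le _)
    rw [div_le_div_iff₀ (by positivity) hd]
    nlinarith [htge t ht, mul_le_mul_of_nonneg_left (htge t ht) hP.le]
  have hd1 : (0:ℝ) ≤ α^(2-2*s)/(2-2*s) := by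
    apply div_nonneg (Real.rpow_nonneg hα.le _); linarith
  have hd2 : (0:ℝ) ≤ α^(-(2*s))/(2*s) := by
    apply div_nonneg (Real.rpow_nonneg hα.le _); linarith
  constructor
  · -- lower bound
    rw [hsplit]
    have m1 : (∫⁻ t in Ioc 0 α, ENNReal.ofReal ((Q/2) * t^(1-2*s)))
        ≤ ∫⁻ t in Ioc 0 α, ENNReal.ofReal (t^(1-2*s) * (P*Q/(P + t^2*Q))) :=
      setLIntegral_mono_ae hfm.aemeasurable
        (ae_of_all _ fun t ht => ENNReal.ofReal_le_ofReal (hlb1 t ht))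
    have m2 : (∫⁻ t in Ioi α, ENNReal.ofReal ((P/2) * t^(-1-2*s)))
        ≤ ∫⁻ t in Ioi α, ENNReal.ofReal (t^(1-2*s) * (P*Q/(P + t^2*Q))) :=
      setLIntegral_mono_ae hfm.aemeasurable
        (ae_of_all _ fun t ht => ENNReal.ofReal_le_ofReal (hlb2 t ht))
    calc ENNReal.ofReal (P^(1-s)*Q^s * (1/(4*s*(1-s))))
        = ENNReal.ofReal ((Q/2) * (α^(2-2*s)/(2-2*s)) + (P/2) * (α^(-(2*s))/(2*s))) := by
          congr 1
          rw [alg_A h0 h1 hP hQ, alg_B h0 h1 hP hQ]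
          field_simp [hP.ne', hQ.ne', h0.ne', hs1.ne', (show (2:ℝ)-2*s ≠ 0 by linarith)]
          ring
      _ = (∫⁻ t in Ioc 0 α, ENNReal.ofReal ((Q/2) * t^(1-2*s)))
            + ∫⁻ t in Ioi α, ENNReal.ofReal ((P/2) * t^(-1-2*s)) := by
          rw [hIoc (Q/2) (by positivity), hIoi (P/2) (by positivity),
            ← ENNReal.ofReal_add (mul_nonneg (by positivity) hd1)
              (mul_nonneg (by positivity) hd2)]
      _ ≤ _ := add_le_add m1 m2
  · -- upper bound
    rw [hsplit]
    have m1 : (∫⁻ t in Ioc 0 α, ENNReal.ofReal (t^(1-2*s) * (P*Q/(P + t^2*Q))))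
        ≤ ∫⁻ t in Ioc 0 α, ENNReal.ofReal (Q * t^(1-2*s)) :=
      setLIntegral_mono_ae hg1m.aemeasurable
        (ae_of_all _ fun t ht => ENNReal.ofReal_le_ofReal (hub1 t ht))
    have m2 : (∫⁻ t in Ioi α, ENNReal.ofReal (t^(1-2*s) * (P*Q/(P + t^2*Q))))
        ≤ ∫⁻ t in Ioi α, ENNReal.ofReal (P * t^(-1-2*s)) :=
      setLIntegral_mono_ae hg2m.aemeasurable
        (ae_of_all _ fun t ht => ENNReal.ofReal_le_ofReal (hub2 t ht))
    refine le_trans (add_le_add m1 m2) ?_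
    rw [hIoc Q hQ.le, hIoi P hP.le,
      ← ENNReal.ofReal_add (mul_nonneg hQ.le hd1) (mul_nonneg hP.le hd2)]
    refine ENNReal.ofReal_le_ofReal (le_of_eq ?_)
    rw [alg_A h0 h1 hP hQ, alg_B h0 h1 hP hQ]
    field_simp [hP.ne', hQ.ne', h0.ne', hs1.ne', (show (2:ℝ)-2*s ≠ 0 by linarith)]
    ring

theorem stmt_15 {Ω : Type*} [MeasurableSpace Ω] (μ : Measure Ω) [SigmaFinite μ]
    (w0 w1 : Ω → ℝ) (hw0m : Measurable w0) (hw1m : Measurable w1)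
    (hw0 : ∀ x, 0 < w0 x) (hw1 : ∀ x, 0 < w1 x) :
    ∃ c C : ℝ, 0 < c ∧ 0 < C ∧
      ∀ s : ℝ, 0 < s → s < 1 → ∀ v : Ω → ℝ, Measurable v →
        ENNReal.ofReal c *
            (∫⁻ x, ENNReal.ofReal ((v x)^2 * (w0 x ^ (1-s) * w1 x ^ s)) ∂μ)
          ≤ ENNReal.ofReal (2 * Real.sin (π*s) / π) *
              ∫⁻ t in Set.Ioi (0:ℝ), ENNReal.ofReal (t ^ (-1-2*s)) * wK2sq μ w0 w1 t v ∧
        ENNReal.ofReal (2 * Real.sin (π*s) / π) *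
            ∫⁻ t in Set.Ioi (0:ℝ), ENNReal.ofReal (t ^ (-1-2*s)) * wK2sq μ w0 w1 t v
          ≤ ENNReal.ofReal C *
              (∫⁻ x, ENNReal.ofReal ((v x)^2 * (w0 x ^ (1-s) * w1 x ^ s)) ∂μ) := by
  refine ⟨1/π, 2, by positivity, by norm_num, ?_⟩
  intro s hs0 hs1 v hv
  have hs1' : (0:ℝ) < 1 - s := by linarith
  have hsin : 0 < Real.sin (π*s) :=
    Real.sin_pos_of_pos_of_lt_pi (by positivity) (by nlinarith [pi_pos])
  have hK : (0:ℝ) ≤ 2 * Real.sin (π*s) / π := by positivity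
  -- Tonelli + inner integral computation
  have hmeas : Measurable (Function.uncurry fun (t : ℝ) (x : Ω) =>
      ENNReal.ofReal (t ^ (-1-2*s)) *
        ENNReal.ofReal ((v x)^2 * (t^2 * (w0 x * w1 x) / (w0 x + t^2 * w1 x)))) := by
    fun_prop
  have h1 : (∫⁻ t in Set.Ioi (0:ℝ), ENNReal.ofReal (t ^ (-1-2*s)) * wK2sq μ w0 w1 t v)
      = ∫⁻ t in Set.Ioi (0:ℝ), ∫⁻ x, ENNReal.ofReal (t ^ (-1-2*s)) *
          ENNReal.ofReal ((v x)^2 * (t^2 * (w0 x * w1 x) / (w0 x + t^2 * w1 x))) ∂μ := by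
    refine setLIntegral_congr_fun measurableSet_Ioi (fun t ht => ?_)
    rw [wK2sq_eq μ w0 w1 hw0m hw1m hw0 hw1 ht v hv, ← lintegral_const_mul' _ _ ofReal_ne_top]
  have h3 : ∀ x : Ω, (∫⁻ t in Set.Ioi (0:ℝ), ENNReal.ofReal (t ^ (-1-2*s)) *
        ENNReal.ofReal ((v x)^2 * (t^2 * (w0 x * w1 x) / (w0 x + t^2 * w1 x))))
      = ENNReal.ofReal ((v x)^2) * ∫⁻ t in Set.Ioi (0:ℝ),
          ENNReal.ofReal (t^(1-2*s) * (w0 x * w1 x / (w0 x + t^2 * w1 x))) := by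
    intro x
    rw [← lintegral_const_mul' _ _ ofReal_ne_top]
    refine setLIntegral_congr_fun measurableSet_Ioi (fun t ht => ?_)
    have ht0 : (0:ℝ) < t := ht
    have key : t^(-1-2*s) * t^2 = t^(1-2*s) := by
      rw [← rpow_expand ht0 s]; field_simp
    rw [← ENNReal.ofReal_mul (Real.rpow_nonneg ht0.le _),
      ← ENNReal.ofReal_mul (sq_nonneg _)]
    congr 1
    rw [← key]; ring
  have hT : (∫⁻ t in Set.Ioi (0:ℝ), ENNReal.ofReal (t ^ (-1-2*s)) * wK2sq μ w0 w1 t v)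
      = ∫⁻ x, (ENNReal.ofReal ((v x)^2) * ∫⁻ t in Set.Ioi (0:ℝ),
          ENNReal.ofReal (t^(1-2*s) * (w0 x * w1 x / (w0 x + t^2 * w1 x)))) ∂μ := by
    rw [h1, lintegral_lintegral_swap hmeas.aemeasurable]
    exact lintegral_congr h3
  -- scalar bounds
  have base1 : 1/π ≤ (2 * Real.sin (π*s) / π) * (1/(4*s*(1-s))) := by
    rw [show (2 * Real.sin (π*s) / π) * (1/(4*s*(1-s)))
        = (2 * Real.sin (π*s)) / (π * (4*s*(1-s))) by rw [div_mul_div_comm, mul_one],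
      div_le_div_iff₀ pi_pos (by positivity)]
    nlinarith [sin_lb hs0 hs1, pi_pos, mul_le_mul_of_nonneg_right (sin_lb hs0 hs1) pi_pos.le]
  have base2 : (2 * Real.sin (π*s) / π) * (1/(2*s*(1-s))) ≤ 2 := by
    rw [show (2 * Real.sin (π*s) / π) * (1/(2*s*(1-s)))
        = (2 * Real.sin (π*s)) / (π * (2*s*(1-s))) by rw [div_mul_div_comm, mul_one],
      div_le_iff₀ (by positivity)]
    nlinarith [sin_ub hs0 hs1, pi_pos]
  constructor
  · rw [hT, ← lintegral_const_mul' _ _ ofReal_ne_top, ← lintegral_const_mul' _ _ ofReal_ne_top]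
    refine lintegral_mono fun x => ?_
    have hb := (inner_bounds hs0 hs1 (hw0 x) (hw1 x)).1
    have hVM : (0:ℝ) ≤ (v x)^2 * (w0 x^(1-s) * w1 x^s) :=
      mul_nonneg (sq_nonneg _)
        (mul_nonneg (Real.rpow_nonneg (hw0 x).le _) (Real.rpow_nonneg (hw1 x).le _))
    have hscal : (1/π) * ((v x)^2 * (w0 x^(1-s) * w1 x^s))
        ≤ (2 * Real.sin (π*s) / π) * ((v x)^2 * (w0 x^(1-s) * w1 x^s * (1/(4*s*(1-s))))) := by
      calc (1/π) * ((v x)^2 * (w0 x^(1-s) * w1 x^s))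
          = ((v x)^2 * (w0 x^(1-s) * w1 x^s)) * (1/π) := by ring
        _ ≤ ((v x)^2 * (w0 x^(1-s) * w1 x^s)) * ((2 * Real.sin (π*s) / π) * (1/(4*s*(1-s)))) :=
            mul_le_mul_of_nonneg_left base1 hVM
        _ = (2 * Real.sin (π*s) / π) * ((v x)^2 * (w0 x^(1-s) * w1 x^s * (1/(4*s*(1-s))))) := by
            ring
    calc ENNReal.ofReal (1/π) * ENNReal.ofReal ((v x)^2 * (w0 x^(1-s) * w1 x^s))
        = ENNReal.ofReal ((1/π) * ((v x)^2 * (w0 x^(1-s) * w1 x^s))) := by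
          rw [← ENNReal.ofReal_mul (by positivity)]
      _ ≤ ENNReal.ofReal ((2 * Real.sin (π*s) / π) *
            ((v x)^2 * (w0 x^(1-s) * w1 x^s * (1/(4*s*(1-s)))))) :=
          ENNReal.ofReal_le_ofReal hscal
      _ = ENNReal.ofReal (2 * Real.sin (π*s) / π) * (ENNReal.ofReal ((v x)^2) *
            ENNReal.ofReal (w0 x^(1-s) * w1 x^s * (1/(4*s*(1-s))))) := by
          rw [ENNReal.ofReal_mul hK, ENNReal.ofReal_mul (sq_nonneg _)]
      _ ≤ ENNReal.ofReal (2 * Real.sin (π*s) / π) * (ENNReal.ofReal ((v x)^2) *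
            ∫⁻ t in Set.Ioi (0:ℝ),
              ENNReal.ofReal (t^(1-2*s) * (w0 x * w1 x / (w0 x + t^2 * w1 x)))) :=
          mul_le_mul_right (mul_le_mul_right hb _) _
  · rw [hT, ← lintegral_const_mul' _ _ ofReal_ne_top, ← lintegral_const_mul' _ _ ofReal_ne_top]
    refine lintegral_mono fun x => ?_
    have hb := (inner_bounds hs0 hs1 (hw0 x) (hw1 x)).2
    have hVM : (0:ℝ) ≤ (v x)^2 * (w0 x^(1-s) * w1 x^s) :=
      mul_nonneg (sq_nonneg _)
        (mul_nonneg (Real.rpow_nonneg (hw0 x).le _) (Real.rpow_nonneg (hw1 x).le _))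
    have hscal : (2 * Real.sin (π*s) / π) * ((v x)^2 * (w0 x^(1-s) * w1 x^s * (1/(2*s*(1-s)))))
        ≤ 2 * ((v x)^2 * (w0 x^(1-s) * w1 x^s)) := by
      calc (2 * Real.sin (π*s) / π) * ((v x)^2 * (w0 x^(1-s) * w1 x^s * (1/(2*s*(1-s)))))
          = ((v x)^2 * (w0 x^(1-s) * w1 x^s)) * ((2 * Real.sin (π*s) / π) * (1/(2*s*(1-s)))) := by
            ring
        _ ≤ ((v x)^2 * (w0 x^(1-s) * w1 x^s)) * 2 := mul_le_mul_of_nonneg_left base2 hVM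
        _ = 2 * ((v x)^2 * (w0 x^(1-s) * w1 x^s)) := by ring
    calc ENNReal.ofReal (2 * Real.sin (π*s) / π) * (ENNReal.ofReal ((v x)^2) *
            ∫⁻ t in Set.Ioi (0:ℝ),
              ENNReal.ofReal (t^(1-2*s) * (w0 x * w1 x / (w0 x + t^2 * w1 x))))
        ≤ ENNReal.ofReal (2 * Real.sin (π*s) / π) * (ENNReal.ofReal ((v x)^2) *
            ENNReal.ofReal (w0 x^(1-s) * w1 x^s * (1/(2*s*(1-s))))) :=
          mul_le_mul_right (mul_le_mul_right hb _) _
      _ = ENNReal.ofReal ((2 * Real.sin (π*s) / π) *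
            ((v x)^2 * (w0 x^(1-s) * w1 x^s * (1/(2*s*(1-s)))))) := by
          rw [ENNReal.ofReal_mul hK, ENNReal.ofReal_mul (sq_nonneg _)]
      _ ≤ ENNReal.ofReal (2 * ((v x)^2 * (w0 x^(1-s) * w1 x^s))) :=
          ENNReal.ofReal_le_ofReal hscal
      _ = ENNReal.ofReal (2:ℝ) * ENNReal.ofReal ((v x)^2 * (w0 x^(1-s) * w1 x^s)) := by
          rw [ENNReal.ofReal_mul (by norm_num)]
end
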